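/- Let H be a connected multigraph with at least one edge, let G be a multigraph, and let G* and H⁺ be as defined (G* adds mdeg_G(v) pendant double-edge gadgets to each vertex v of G; H⁺ adds one such gadget to each vertex of H). Then the minimum size of an H-cover of G is at most the minimum size of an H⁺-cover of G*. -/

import Mathlib

open scoped Classical

/-- A finite loopless multigraph: `E` indexes edges, `ends e` gives the endpoints. -/
structure Multigraph (V : Type) (E : Type) where
  ends : E → Sym2 V
  loopless : ∀ e, ¬ (ends e).IsDiag

namespace Multigraph

variable {V E V1 E1 V2 E2 : Type}

/-- Multidegree: number of edges (with multiplicity) incident with `v`. -/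
noncomputable def mdeg (G : Multigraph V E) [Fintype E] (v : V) : ℕ :=
  (Finset.univ.filter (fun e => v ∈ G.ends e)).card

/-- Walks in a multigraph, remembering which edge instance is used at each step. -/
inductive Walk (G : Multigraph V E) : V → V → Type where
  | nil (v : V) : Walk G v v
  | cons {u v w : V} (e : E) (he : G.ends e = s(u, v)) (p : Walk G v w) : Walk G u w

namespace Walk

variable {G : Multigraph V E}

def support : {u v : V} → G.Walk u v → List V
  | u, _, .nil _ => [u]
  | u, _, .cons _ _ p => u :: p.support

def edges : {u v : V} → G.Walk u v → List E
  | _, _, .nil _ => []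
  | _, _, .cons e _ p => e :: p.edges

/-- A walk is a path when its vertices are pairwise distinct. -/
def IsPath {u v : V} (p : G.Walk u v) : Prop := p.support.Nodup

/-- The internal vertices of a walk (all vertices except the two endpoints). -/
def interior {u v : V} (p : G.Walk u v) : List V := p.support.tail.dropLast

end Walk

/-- An `H`-immersion model in `G`. -/
structure ImmersionModel (H : Multigraph V1 E1) (G : Multigraph V E) where
  vmap : V1 → V
  vmap_inj : Function.Injective vmap
  src : E1 → V1
  tgt : E1 → V1
  ends_eq : ∀ e, H.ends e = s(src e, tgt e)
  path : ∀ e, G.Walk (vmap (src e)) (vmap (tgt e))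
  path_isPath : ∀ e, (path e).IsPath
  edge_disjoint : ∀ e₁ e₂, e₁ ≠ e₂ → ∀ x, x ∈ (path e₁).edges → x ∉ (path e₂).edges

namespace ImmersionModel

variable {H : Multigraph V1 E1} {G : Multigraph V E}

/-- The edges of the immersion expansion associated with the model. -/
def edgeSet (m : ImmersionModel H G) : Set E := {x | ∃ e, x ∈ (m.path e).edges}

/-- The vertices of the immersion expansion associated with the model. -/
def vertSet (m : ImmersionModel H G) : Set V :=
  {x | (∃ a, m.vmap a = x) ∨ ∃ e, x ∈ (m.path e).support}

end ImmersionModel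

/-- `G` contains `H` as an immersion. -/
def Immersed (H : Multigraph V1 E1) (G : Multigraph V E) : Prop :=
  Nonempty (ImmersionModel H G)

/-- Deleting a set of edges from a multigraph. -/
def deleteEdges (G : Multigraph V E) (F : Set E) : Multigraph V {e : E // e ∉ F} where
  ends e := G.ends e.1
  loopless e := G.loopless e.1

/-- The minimum size of an `H`-cover of `G`: a set of edges meeting every
`H`-immersion expansion. (By convention `sInf ∅ = 0`.) -/
noncomputable def coverNum (H : Multigraph V1 E1) (G : Multigraph V E) : ℕ :=
  sInf {n | ∃ C : Finset E, ¬ Immersed H (G.deleteEdges ↑C) ∧ C.card = n}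

/-- The maximum size of an `H`-packing in `G`: a collection of pairwise
edge-disjoint `H`-immersion expansions. -/
noncomputable def packNum (H : Multigraph V1 E1) (G : Multigraph V E) : ℕ :=
  sSup {n | ∃ f : Fin n → ImmersionModel H G,
    ∀ i j, i ≠ j → Disjoint (f i).edgeSet (f j).edgeSet}

/-- Connectivity of a multigraph. -/
def Connected (G : Multigraph V E) : Prop :=
  Nonempty V ∧ ∀ u v : V, Nonempty (G.Walk u v)

/-- Reachability in `G` avoiding the vertex set `X`. -/
def ReachAvoid (G : Multigraph V E) (X : Set V) (u v : V) : Prop :=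
  ∃ p : G.Walk u v, ∀ x ∈ p.support, x ∉ X

/-- The underlying simple graph of a multigraph. -/
def toSimple (G : Multigraph V E) : SimpleGraph V where
  Adj u v := u ≠ v ∧ ∃ e, G.ends e = s(u, v)
  symm := by
    constructor
    rintro u v ⟨h, e, he⟩
    exact ⟨h.symm, e, by rw [he, Sym2.eq_swap]⟩
  loopless := ⟨fun v h => h.1 rfl⟩

end Multigraph

section Minor

/-- `A` is a minor of `B` (branch-set/minor-model definition). -/
def SimpleGraphMinorOf {α β : Type} (A : SimpleGraph α) (B : SimpleGraph β) : Prop :=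
  ∃ C : α → Set β,
    (∀ a, (C a).Nonempty) ∧
    (∀ a, (B.induce (C a)).Connected) ∧
    (Pairwise fun a a' => Disjoint (C a) (C a')) ∧
    (∀ a a', A.Adj a a' → ∃ x ∈ C a, ∃ y ∈ C a', B.Adj x y)

end Minor

namespace Multigraph

variable {V E : Type}

/-- Planarity of a loopless multigraph, via Wagner's theorem: no `K₅` and
no `K₃,₃` minor in the underlying simple graph. -/
def Planar (G : Multigraph V E) : Prop :=
  ¬ SimpleGraphMinorOf (SimpleGraph.completeGraph (Fin 5)) G.toSimple ∧
  ¬ SimpleGraphMinorOf (completeBipartiteGraph (Fin 3) (Fin 3)) G.toSimple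

lemma isDiag_map_inl {α β : Type} (p : Sym2 α) :
    (p.map (Sum.inl : α → α ⊕ β)).IsDiag ↔ p.IsDiag := by
  induction p using Sym2.ind with
  | _ a b => simp

/-- `G⁺`: attach to every vertex `v` a gadget of two new vertices `(v,false)`,
`(v,true)` joined by a double edge, each joined to `v` by a single edge. -/
def plus (G : Multigraph V E) :
    Multigraph (V ⊕ (V × Bool)) (E ⊕ ((V × Fin 2) ⊕ (V × Bool))) where
  ends
    | .inl e => (G.ends e).map .inl
    | .inr (.inl (v, _)) => s(.inr (v, false), .inr (v, true))
    | .inr (.inr (v, b)) => s(.inl v, .inr (v, b))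
  loopless := by
    rintro (e | ⟨v, i⟩ | ⟨v, b⟩) h
    · exact G.loopless e ((isDiag_map_inl _).1 h)
    · simp at h
    · simp at h

/-- `G*`: attach, at every vertex `v` and for every `i ∈ {1,…,mdeg v}`, a gadget of two
new vertices joined by a double edge, each joined to `v` by a single edge. -/
noncomputable def star (G : Multigraph V E) [Fintype E] :
    Multigraph (V ⊕ ((Σ v : V, Fin (G.mdeg v)) × Bool))
      (E ⊕ (((Σ v : V, Fin (G.mdeg v)) × Fin 2) ⊕ ((Σ v : V, Fin (G.mdeg v)) × Bool))) where
  ends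
    | .inl e => (G.ends e).map .inl
    | .inr (.inl (p, _)) => s(.inr (p, false), .inr (p, true))
    | .inr (.inr (p, b)) => s(.inl p.1, .inr (p, b))
  loopless := by
    rintro (e | ⟨p, i⟩ | ⟨p, b⟩) h
    · exact G.loopless e ((isDiag_map_inl _).1 h)
    · simp at h
    · simp at h

/-- The subdivision of `G` in which the edge `e` (oriented from `src e` to `tgt e`)
is subdivided `n e` times, i.e. replaced by a path with `n e` internal vertices. -/
def subdivide (G : Multigraph V E) (src tgt : E → V)
    (hst : ∀ e, G.ends e = s(src e, tgt e)) (n : E → ℕ) :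
    Multigraph (V ⊕ (Σ e : E, Fin (n e))) (Σ e : E, Fin (n e + 1)) where
  ends := fun q =>
    s(if _ : q.2.val = 0 then Sum.inl (src q.1)
        else Sum.inr ⟨q.1, ⟨q.2.val - 1, by have := q.2.isLt; omega⟩⟩,
      if _ : q.2.val = n q.1 then Sum.inl (tgt q.1)
        else Sum.inr ⟨q.1, ⟨q.2.val, by have := q.2.isLt; omega⟩⟩)
  loopless := by
    rintro ⟨e, i⟩ h
    rw [Sym2.mk_isDiag_iff] at h
    split_ifs at h with h1 h2 h2 <;>
      first
        | exact Sum.noConfusion h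
        | (have hl := G.loopless e
           rw [hst e, Sym2.mk_isDiag_iff] at hl
           exact hl (Sum.inl.inj h))
        | (have h3 := Sum.inr.inj h
           simp at h1 h3
           have h4 : i.val ≠ 0 := fun h0 => h1 (Fin.ext h0)
           omega)

end Multigraph

namespace Multigraph

/-- The multigraph underlying a simple graph. -/
def ofSimple {α : Type} (S : SimpleGraph α) : Multigraph α S.edgeSet where
  ends e := e.1
  loopless e := S.not_isDiag_of_mem_edgeSet e.2

/-- A strong immersion model: additionally, no branch vertex is an internal
vertex of a certifying path. -/
structure StrongImmersionModel {V1 E1 V E : Type} (H : Multigraph V1 E1) (G : Multigraph V E)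
    extends ImmersionModel H G where
  not_internal : ∀ (e : E1) (x : V1), vmap x ∉ (path e).interior

/-- An `H`-topological-minor model in `G`: certifying paths are internally
vertex-disjoint and their internal vertices avoid the branch vertices. -/
structure TopMinorModel {V1 E1 V E : Type} (H : Multigraph V1 E1) (G : Multigraph V E) where
  vmap : V1 → V
  vmap_inj : Function.Injective vmap
  src : E1 → V1
  tgt : E1 → V1
  ends_eq : ∀ e, H.ends e = s(src e, tgt e)
  path : ∀ e, G.Walk (vmap (src e)) (vmap (tgt e))
  path_isPath : ∀ e, (path e).IsPath
  internal_disjoint : ∀ e₁ e₂, e₁ ≠ e₂ → ∀ x, x ∈ (path e₁).interior → x ∉ (path e₂).support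
  internal_avoid : ∀ (e : E1) (x : V1), vmap x ∉ (path e).interior

end Multigraph

section Walls

/-- The `m × n` grid graph. -/
def gridGraph (m n : ℕ) : SimpleGraph (Fin m × Fin n) where
  Adj p q := (p.1 = q.1 ∧ (p.2.val + 1 = q.2.val ∨ q.2.val + 1 = p.2.val)) ∨
             (p.2 = q.2 ∧ (p.1.val + 1 = q.1.val ∨ q.1.val + 1 = p.1.val))
  symm := by constructor; rintro p q (⟨h, h'⟩ | ⟨h, h'⟩) <;> [left; right] <;> exact ⟨h.symm, h'.symm⟩
  loopless := by constructor; rintro p (⟨-, h | h⟩ | ⟨-, h | h⟩) <;> omega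

/-- The `k×k` grid `Γ_k` as a multigraph. -/
def Gamma (k : ℕ) : Multigraph (Fin k × Fin k) (gridGraph k k).edgeSet :=
  Multigraph.ofSimple (gridGraph k k)

/-- The `(k+1) × (2k+2)` grid with the vertical edges `{(x,y),(x+1,y)}` with `x+y` odd
(in 1-indexed coordinates) removed. -/
def wallPre (k : ℕ) : SimpleGraph (Fin (k + 1) × Fin (2 * k + 2)) where
  Adj p q := (gridGraph (k + 1) (2 * k + 2)).Adj p q ∧
    ¬ (p.2 = q.2 ∧ (min p.1.val q.1.val + p.2.val) % 2 = 1)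
  symm := by
    constructor
    rintro p q ⟨h, h'⟩
    refine ⟨(gridGraph _ _).adj_symm h, fun ⟨hc, hp⟩ => h' ⟨hc.symm, ?_⟩⟩
    rw [Nat.min_comm] at hp
    rw [← hc]
    exact hp
  loopless := ⟨fun p h => (gridGraph _ _).loopless.irrefl p h.1⟩

/-- Degree of a vertex in `wallPre k`. -/
noncomputable def wallPreDeg (k : ℕ) (v : Fin (k + 1) × Fin (2 * k + 2)) : ℕ :=
  (Finset.univ.filter (fun w => (wallPre k).Adj v w)).card

/-- The vertex set of the `k`-wall: vertices of degree `≠ 1`. -/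
def wallVerts (k : ℕ) : Set (Fin (k + 1) × Fin (2 * k + 2)) :=
  {v | wallPreDeg k v ≠ 1}

/-- The `k`-wall `W_k`, as a simple graph. -/
noncomputable def wallSimple (k : ℕ) : SimpleGraph (wallVerts k) :=
  (wallPre k).induce (wallVerts k)

/-- The `k`-wall `W_k`, as a multigraph. -/
noncomputable def Wall (k : ℕ) : Multigraph (wallVerts k) (wallSimple k).edgeSet :=
  Multigraph.ofSimple (wallSimple k)

/-- The doubled edges of `W⁺_k`: the horizontal edges lying on both a vertical and a
horizontal path of the wall, i.e. those whose lower column index is odd (1-indexed). -/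
def isDoubledEdge (k : ℕ) (p : Sym2 (wallVerts k)) : Prop :=
  ∃ a b : wallVerts k, p = s(a, b) ∧ (a : Fin (k + 1) × Fin (2 * k + 2)).1 = (b : Fin (k + 1) × Fin (2 * k + 2)).1 ∧
    (b : Fin (k + 1) × Fin (2 * k + 2)).2.val = (a : Fin (k + 1) × Fin (2 * k + 2)).2.val + 1 ∧
    (a : Fin (k + 1) × Fin (2 * k + 2)).2.val % 2 = 0

/-- `W⁺_k`: the `k`-wall with a second parallel copy of every doubled edge. -/
noncomputable def WallPlus (k : ℕ) :
    Multigraph (wallVerts k)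
      ((wallSimple k).edgeSet ⊕ {p : Sym2 (wallVerts k) // p ∈ (wallSimple k).edgeSet ∧ isDoubledEdge k p}) where
  ends
    | .inl e => e.1
    | .inr e => e.1
  loopless := by
    rintro (e | e)
    · exact (wallSimple k).not_isDiag_of_mem_edgeSet e.2
    · exact (wallSimple k).not_isDiag_of_mem_edgeSet e.2.1

end Walls

namespace Multigraph

variable {V E : Type}

/-- Tree-partition width of a multigraph (bags may be empty; w.l.o.g. bags are
indexed by the vertices themselves). -/
noncomputable def tpw (G : Multigraph V E) [Fintype V] [Fintype E] : ℕ :=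
  sInf {w | ∃ T : SimpleGraph V, T.IsTree ∧ ∃ bag : V → V,
    (Fintype.card V = 1 ∨
      ∀ (e : E) (a b : V), G.ends e = s(a, b) → bag a = bag b ∨ T.Adj (bag a) (bag b)) ∧
    (∀ t : V, (Finset.univ.filter (fun v => bag v = t)).card ≤ w) ∧
    (∀ t t' : V, T.Adj t t' →
      (Finset.univ.filter (fun e : E =>
        ∃ a b, G.ends e = s(a, b) ∧ bag a = t ∧ bag b = t')).card ≤ w)}

section ThreeCenter

variable {W : Type} [Fintype W]

/-- Degree of `v` in the state `(A, m)`: `A` is the set of remaining vertices and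
`m` gives edge multiplicities. -/
noncomputable def stDeg (A : Finset W) (m : Sym2 W → ℕ) (v : W) : ℕ :=
  ∑ w ∈ A.erase v, m s(v, w)

/-- One reduction step of the 3-center construction relative to the marked set `X`:
delete a vertex of degree one, or suppress (dissolve) a vertex of degree two not in `X`. -/
inductive CStep (X : Set W) :
    Finset W × (Sym2 W → ℕ) → Finset W × (Sym2 W → ℕ) → Prop
  | delete (A : Finset W) (m : Sym2 W → ℕ) (v : W) (hv : v ∈ A) (hd : stDeg A m v = 1) :
      CStep X (A, m) (A.erase v, fun p => if v ∈ p then 0 else m p)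
  | suppress (A : Finset W) (m : Sym2 W → ℕ) (v a b : W) (hv : v ∈ A) (hx : v ∉ X)
      (ha : a ∈ A) (hb : b ∈ A) (hav : a ≠ v) (hbv : b ≠ v) (hd : stDeg A m v = 2)
      (h1 : 1 ≤ m s(v, a)) (h2 : a = b → m s(v, a) = 2) (h3 : a ≠ b → 1 ≤ m s(v, b)) :
      CStep X (A, m) (A.erase v,
        fun p => if v ∈ p then 0 else if a ≠ b ∧ p = s(a, b) then m p + 1 else m p)

/-- The number of vertices of the 3-center of the marked multigraph given by the
state `(A, m)` with marked set `X`: the size of a reduct on which no step applies. -/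
noncomputable def centerSize (X : Set W) (A : Finset W) (m : Sym2 W → ℕ) : ℕ :=
  sInf {c | ∃ s : Finset W × (Sym2 W → ℕ),
    Relation.ReflTransGen (CStep X) (A, m) s ∧ (∀ s', ¬ CStep X s s') ∧ s.1.card = c}

end ThreeCenter

section TCW

variable {n : ℕ}

/-- The consolidation map for the torso at node `t` of a tree-cut decomposition:
a vertex whose bag is `t` is kept, and any other vertex is sent to the peripheral
vertex indexed by the neighbour `u` of `t` whose branch contains its bag. -/
noncomputable def consMap (T : SimpleGraph (Fin n)) (bag : V → Fin n) (t : Fin n) (a : V) :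
    V ⊕ Fin n :=
  if bag a = t then Sum.inl a
  else if h : ∃ u, T.Adj t u ∧ (T.deleteEdges {s(t, u)}).Reachable (bag a) u
    then Sum.inr h.choose else Sum.inl a

/-- The vertex set of the torso at `t`: the bag of `t` together with one peripheral
vertex for each neighbour of `t` in the decomposition tree. -/
noncomputable def torsoA [Fintype V] (T : SimpleGraph (Fin n)) (bag : V → Fin n) (t : Fin n) :
    Finset (V ⊕ Fin n) :=
  (Finset.univ.filter (fun a : V => bag a = t)).image Sum.inl ∪
    (Finset.univ.filter (fun u : Fin n => T.Adj t u)).image Sum.inr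

/-- The edge multiplicities of the torso at `t`. -/
noncomputable def torsoM (G : Multigraph V E) [Fintype E] (T : SimpleGraph (Fin n))
    (bag : V → Fin n) (t : Fin n) : Sym2 (V ⊕ Fin n) → ℕ :=
  fun p => if p.IsDiag then 0
    else (Finset.univ.filter (fun e : E => (G.ends e).map (consMap T bag t) = p)).card

/-- The adhesion of the tree edge `{t, t'}`: the number of edges of `G` whose endpoints
lie in bags on different sides of the edge. -/
noncomputable def adhE (G : Multigraph V E) [Fintype E] (T : SimpleGraph (Fin n))
    (bag : V → Fin n) (t t' : Fin n) : ℕ :=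
  (Finset.univ.filter (fun e : E => ∃ a b, G.ends e = s(a, b) ∧
    (T.deleteEdges {s(t, t')}).Reachable (bag a) t ∧
    (T.deleteEdges {s(t, t')}).Reachable (bag b) t')).card

/-- Tree-cut width of a multigraph: the minimum, over tree-cut decompositions, of
the maximum of all adhesions and of the numbers of vertices of the 3-centers
of the torsos. -/
noncomputable def tcw (G : Multigraph V E) [Fintype V] [Fintype E] : ℕ :=
  sInf {w | ∃ (n : ℕ) (T : SimpleGraph (Fin n)), T.IsTree ∧ ∃ bag : V → Fin n,
    (∀ t t', T.Adj t t' → adhE G T bag t t' ≤ w) ∧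
    (∀ t, centerSize (Sum.inl '' {a | bag a = t}) (torsoA T bag t) (torsoM G T bag t) ≤ w)}

end TCW

end Multigraph

namespace CoverStarAux

open Multigraph

variable {V E V1 E1 : Type}

lemma exists_sym2_eq {α : Type} (p : Sym2 α) : ∃ a b, p = s(a, b) := by
  induction p using Sym2.ind with
  | _ a b => exact ⟨a, b, rfl⟩

noncomputable def epair {α : Type} (p : Sym2 α) : α × α :=
  ⟨(exists_sym2_eq p).choose, (exists_sym2_eq p).choose_spec.choose⟩

lemma epair_spec {α : Type} (p : Sym2 α) : p = s((epair p).1, (epair p).2) :=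
  (exists_sym2_eq p).choose_spec.choose_spec

lemma mem_sym2_cases {α : Type} {p : Sym2 α} {v : α} (h : v ∈ p) :
    v = (epair p).1 ∨ v = (epair p).2 := by
  rw [epair_spec p] at h
  exact Sym2.mem_iff.mp h

lemma exists_edge_start {G : Multigraph V E} {u w : V} (p : G.Walk u w) (h : u ≠ w) :
    ∃ f ∈ p.edges, u ∈ G.ends f := by
  cases p with
  | nil => exact absurd rfl h
  | cons e he q =>
    exact ⟨e, by simp [Multigraph.Walk.edges], by rw [he]; simp⟩

lemma exists_edge_end {G : Multigraph V E} {u w : V} (p : G.Walk u w) :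
    u ≠ w → ∃ f ∈ p.edges, w ∈ G.ends f := by
  induction p with
  | nil => exact fun h => absurd rfl h
  | @cons u1 v1 w1 e he q ih =>
    intro _
    by_cases hvc : v1 = w1
    · subst hvc
      exact ⟨e, by simp [Multigraph.Walk.edges], by rw [he]; simp⟩
    · obtain ⟨f, h1, h2⟩ := ih hvc
      exact ⟨f, by simp [Multigraph.Walk.edges]; exact Or.inr h1, h2⟩

noncomputable section

variable (G : Multigraph V E) [Fintype E]

abbrev PG : Type := Σ v : V, Fin (G.mdeg v)

abbrev SEg : Type := E ⊕ ((PG G × Fin 2) ⊕ (PG G × Bool))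

def touched (X : Finset (SEg G)) (q : PG G) : Prop :=
  Sum.inr (Sum.inl (q, (0 : Fin 2))) ∈ X ∨ Sum.inr (Sum.inl (q, (1 : Fin 2))) ∈ X ∨
  Sum.inr (Sum.inr (q, false)) ∈ X ∨ Sum.inr (Sum.inr (q, true)) ∈ X

def Bset (X : Finset (SEg G)) : Set V := {v | ∀ i : Fin (G.mdeg v), touched G X ⟨v, i⟩}

def Cfin (X : Finset (SEg G)) : Finset E :=
  Finset.univ.filter fun e => Sum.inl e ∈ X ∨ ∃ v, v ∈ G.ends e ∧ v ∈ Bset G X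

lemma inl_mem_Cfin {X : Finset (SEg G)} {f : E} (h : Sum.inl f ∈ X) : f ∈ Cfin G X :=
  Finset.mem_filter.mpr ⟨Finset.mem_univ _, Or.inl h⟩

lemma incident_mem_Cfin {X : Finset (SEg G)} {f : E} {v : V} (hv : v ∈ G.ends f)
    (hB : v ∈ Bset G X) : f ∈ Cfin G X :=
  Finset.mem_filter.mpr ⟨Finset.mem_univ _, Or.inr ⟨v, hv, hB⟩⟩

def gadV : SEg G → Option V
  | Sum.inl _ => none
  | Sum.inr (Sum.inl (q, _)) => some q.1
  | Sum.inr (Sum.inr (q, _)) => some q.1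

def gadQ : SEg G → Option (PG G)
  | Sum.inl _ => none
  | Sum.inr (Sum.inl (q, _)) => some q
  | Sum.inr (Sum.inr (q, _)) => some q

def pick (X : Finset (SEg G)) (q : PG G) : SEg G :=
  if Sum.inr (Sum.inl (q, (0 : Fin 2))) ∈ X then Sum.inr (Sum.inl (q, (0 : Fin 2)))
  else if Sum.inr (Sum.inl (q, (1 : Fin 2))) ∈ X then Sum.inr (Sum.inl (q, (1 : Fin 2)))
  else if Sum.inr (Sum.inr (q, false)) ∈ X then Sum.inr (Sum.inr (q, false))
  else Sum.inr (Sum.inr (q, true))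

lemma pick_mem {X : Finset (SEg G)} {q : PG G} (h : touched G X q) : pick G X q ∈ X := by
  unfold pick
  unfold touched at h
  split_ifs with h1 h2 h3 <;> tauto

lemma gadQ_pick (X : Finset (SEg G)) (q : PG G) : gadQ G (pick G X q) = some q := by
  unfold pick
  split_ifs <;> rfl

lemma gadV_pick (X : Finset (SEg G)) (q : PG G) : gadV G (pick G X q) = some q.1 := by
  unfold pick
  split_ifs <;> rfl

lemma card_Cfin_le (X : Finset (SEg G)) : (Cfin G X).card ≤ X.card := by
  set C1 := (Cfin G X).filter (fun e => Sum.inl e ∈ X) with hC1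
  set C2 := (Cfin G X).filter (fun e => ¬ Sum.inl e ∈ X) with hC2
  have hsplitC : C1.card + C2.card = (Cfin G X).card :=
    Finset.card_filter_add_card_filter_not _
  set X1 := X.filter (fun x => x.isLeft) with hX1
  set X2 := X.filter (fun x => ¬ x.isLeft) with hX2
  have hsplitX : X1.card + X2.card = X.card :=
    Finset.card_filter_add_card_filter_not _
  have h1 : C1.card ≤ X1.card := by
    apply Finset.card_le_card_of_injOn (fun e => (Sum.inl e : SEg G))
    · intro e heC
      rw [hC1, Finset.mem_coe, Finset.mem_filter] at heC
      exact Finset.mem_filter.mpr ⟨heC.2, rfl⟩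
    · exact fun a _ b _ h => Sum.inl.inj h
  have h2 : C2.card ≤ X2.card := by
    set endF : Finset V :=
      Finset.univ.biUnion (fun e : E => {(epair (G.ends e)).1, (epair (G.ends e)).2}) with hendF
    set Bfin := endF.filter (fun v => v ∈ Bset G X) with hBfin
    have hsub : C2 ⊆ Bfin.biUnion (fun v => Finset.univ.filter (fun e => v ∈ G.ends e)) := by
      intro e heC
      rw [hC2, Finset.mem_filter] at heC
      obtain ⟨heCf, hnotl⟩ := heC
      rcases (Finset.mem_filter.mp heCf).2 with h | ⟨v, hv, hvB⟩
      · exact absurd h hnotl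
      · refine Finset.mem_biUnion.mpr ⟨v, ?_, Finset.mem_filter.mpr ⟨Finset.mem_univ _, hv⟩⟩
        refine Finset.mem_filter.mpr ⟨?_, hvB⟩
        refine Finset.mem_biUnion.mpr ⟨e, Finset.mem_univ _, ?_⟩
        rcases mem_sym2_cases hv with h' | h' <;> simp [h']
    have hstep1 : C2.card ≤ ∑ v ∈ Bfin, G.mdeg v := by
      refine le_trans (Finset.card_le_card hsub) (le_trans Finset.card_biUnion_le (le_of_eq ?_))
      rfl
    have hstep2 : ∀ v ∈ Bfin, G.mdeg v ≤ (X.filter (fun x => gadV G x = some v)).card := by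
      intro v hvB
      have hvB' : v ∈ Bset G X := (Finset.mem_filter.mp hvB).2
      have hkey := Finset.card_le_card_of_injOn
        (f := fun i : Fin (G.mdeg v) => pick G X ⟨v, i⟩)
        (s := Finset.univ) (t := X.filter (fun x => gadV G x = some v))
        (fun i _ => Finset.mem_filter.mpr ⟨pick_mem G (hvB' i), gadV_pick G X ⟨v, i⟩⟩)
        (fun i _ j _ hij => by
          have h' := congrArg (gadQ G) hij
          rw [gadQ_pick, gadQ_pick] at h'
          have h2 : (⟨v, i⟩ : PG G) = ⟨v, j⟩ := Option.some.inj h'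
          exact sigma_mk_injective (β := fun v => Fin (G.mdeg v)) h2)
      simpa using hkey
    have hstep3 : ∑ v ∈ Bfin, (X.filter (fun x => gadV G x = some v)).card ≤ X2.card := by
      rw [← Finset.card_biUnion]
      · apply Finset.card_le_card
        intro x hx
        obtain ⟨v, _, hxv⟩ := Finset.mem_biUnion.mp hx
        obtain ⟨hxX, hg⟩ := Finset.mem_filter.mp hxv
        refine Finset.mem_filter.mpr ⟨hxX, ?_⟩
        rcases x with e | (⟨q, j⟩ | ⟨q, b⟩) <;> simp_all [gadV]
      · intro v1 _ v2 _ hne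
        refine Finset.disjoint_left.mpr (fun x hx1 hx2 => ?_)
        have e1 := (Finset.mem_filter.mp hx1).2
        have e2 := (Finset.mem_filter.mp hx2).2
        rw [e1] at e2
        exact hne (Option.some.inj e2)
    calc C2.card ≤ ∑ v ∈ Bfin, G.mdeg v := hstep1
      _ ≤ ∑ v ∈ Bfin, (X.filter (fun x => gadV G x = some v)).card := Finset.sum_le_sum hstep2
      _ ≤ X2.card := hstep3
  omega

def liftW (C : Set E) (X : Set (SEg G)) (h : ∀ f : E, Sum.inl f ∈ X → f ∈ C) :
    ∀ {u w : V}, (G.deleteEdges C).Walk u w → (G.star.deleteEdges X).Walk (Sum.inl u) (Sum.inl w)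
  | _, _, .nil v => .nil (Sum.inl v)
  | _, _, @Multigraph.Walk.cons _ _ _ u v w e he p =>
      .cons ⟨Sum.inl e.1, fun hm => e.2 (h e.1 hm)⟩
        (by
          show Sym2.map Sum.inl ((G.deleteEdges C).ends e) = _
          rw [he, Sym2.map_pair_eq])
        (liftW C X h p)

lemma liftW_support (C : Set E) (X : Set (SEg G)) (h : ∀ f : E, Sum.inl f ∈ X → f ∈ C) :
    ∀ {u w : V} (p : (G.deleteEdges C).Walk u w),
      (liftW G C X h p).support = p.support.map Sum.inl
  | _, _, .nil v => rfl
  | _, _, .cons e he p => by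
      show Sum.inl _ :: (liftW G C X h p).support = _
      rw [liftW_support C X h p]
      rfl

lemma liftW_isPath (C : Set E) (X : Set (SEg G)) (h : ∀ f : E, Sum.inl f ∈ X → f ∈ C)
    {u w : V} (p : (G.deleteEdges C).Walk u w) (hp : p.IsPath) :
    (liftW G C X h p).IsPath := by
  unfold Multigraph.Walk.IsPath at hp ⊢
  rw [liftW_support]
  exact hp.map (fun a b hab => Sum.inl.inj hab)

lemma liftW_edges (C : Set E) (X : Set (SEg G)) (h : ∀ f : E, Sum.inl f ∈ X → f ∈ C) :
    ∀ {u w : V} (p : (G.deleteEdges C).Walk u w) (x : _) (_ : x ∈ (liftW G C X h p).edges),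
      ∃ f ∈ p.edges, x.1 = Sum.inl f.1
  | _, _, .nil v, x, hx => absurd hx (fun h' => List.not_mem_nil h')
  | _, _, .cons e he p, x, hx => by
      rcases List.mem_cons.mp hx with h1 | h1
      · exact ⟨e, by simp [Multigraph.Walk.edges], by rw [h1]⟩
      · obtain ⟨f, hf1, hf2⟩ := liftW_edges C X h p x h1
        exact ⟨f, by simp [Multigraph.Walk.edges]; exact Or.inr hf1, hf2⟩

lemma isPath_single {V' E' : Type} {G' : Multigraph V' E'} {u w : V'} (hne : u ≠ w) (e : E')
    (he : G'.ends e = s(u, w)) : (Multigraph.Walk.cons e he (.nil w) : G'.Walk u w).IsPath := by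
  simp [Multigraph.Walk.IsPath, Multigraph.Walk.support, hne]

lemma mem_edges_single {V' E' : Type} {G' : Multigraph V' E'} {u w : V'} {e : E'}
    {he : G'.ends e = s(u, w)} {x : E'}
    (hx : x ∈ (Multigraph.Walk.cons e he (.nil w) : G'.Walk u w).edges) : x = e := by
  simpa [Multigraph.Walk.edges] using hx

def bigModel (H : Multigraph V1 E1) (X : Finset (SEg G))
    (m : ImmersionModel H (G.deleteEdges ↑(Cfin G X)))
    (i : ∀ x : V1, Fin (G.mdeg (m.vmap x)))
    (h0 : ∀ (x : V1) (j : Fin 2), Sum.inr (Sum.inl ((⟨m.vmap x, i x⟩ : PG G), j)) ∉ X)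
    (h1 : ∀ (x : V1) (b : Bool), Sum.inr (Sum.inr ((⟨m.vmap x, i x⟩ : PG G), b)) ∉ X) :
    ImmersionModel H.plus (G.star.deleteEdges ↑X) where
  vmap := Sum.elim (fun x => Sum.inl (m.vmap x)) (fun xb => Sum.inr (⟨m.vmap xb.1, i xb.1⟩, xb.2))
  vmap_inj := by
    rintro (x | ⟨x, b⟩) (y | ⟨y, c⟩) h <;> simp only [Sum.elim_inl, Sum.elim_inr] at h
    · rw [m.vmap_inj (Sum.inl.inj h)]
    · exact absurd h (by simp)
    · exact absurd h (by simp)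
    · have h' := Sum.inr.inj h
      obtain ⟨hq, hb⟩ := Prod.mk.injEq .. ▸ h'
      have hv : m.vmap x = m.vmap y := congrArg Sigma.fst hq
      obtain rfl := m.vmap_inj hv
      rw [hb]
  src := fun e' => match e' with
    | Sum.inl e => Sum.inl (m.src e)
    | Sum.inr (Sum.inl (x, _)) => Sum.inr (x, false)
    | Sum.inr (Sum.inr (x, _)) => Sum.inl x
  tgt := fun e' => match e' with
    | Sum.inl e => Sum.inl (m.tgt e)
    | Sum.inr (Sum.inl (x, _)) => Sum.inr (x, true)
    | Sum.inr (Sum.inr (x, b)) => Sum.inr (x, b)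
  ends_eq := by
    rintro (e | ⟨x, j⟩ | ⟨x, b⟩)
    · show Sym2.map Sum.inl (H.ends e) = s(Sum.inl (m.src e), Sum.inl (m.tgt e))
      rw [m.ends_eq e, Sym2.map_pair_eq]
    · rfl
    · rfl
  path := fun e' => match e' with
    | Sum.inl e => liftW G ↑(Cfin G X) ↑X (fun f hf => inl_mem_Cfin G hf) (m.path e)
    | Sum.inr (Sum.inl (x, j)) =>
        .cons ⟨Sum.inr (Sum.inl (⟨m.vmap x, i x⟩, j)), h0 x j⟩ rfl (.nil _)
    | Sum.inr (Sum.inr (x, b)) =>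
        .cons ⟨Sum.inr (Sum.inr (⟨m.vmap x, i x⟩, b)), h1 x b⟩ rfl (.nil _)
  path_isPath := by
    rintro (e | ⟨x, j⟩ | ⟨x, b⟩)
    · exact liftW_isPath G _ _ _ (m.path e) (m.path_isPath e)
    · refine isPath_single ?_ _ _
      simp
    · refine isPath_single ?_ _ _
      simp
  edge_disjoint := by
    rintro (e1 | ⟨x1, j1⟩ | ⟨x1, b1⟩) (e2 | ⟨x2, j2⟩ | ⟨x2, b2⟩) hne x hx1 hx2
    · obtain ⟨f1, hf1, hx1'⟩ := liftW_edges G _ _ _ (m.path e1) x hx1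
      obtain ⟨f2, hf2, hx2'⟩ := liftW_edges G _ _ _ (m.path e2) x hx2
      have hf : f1 = f2 := Subtype.ext (Sum.inl.inj (hx1'.symm.trans hx2'))
      exact m.edge_disjoint e1 e2 (fun h => hne (congrArg Sum.inl h)) f1 hf1 (hf ▸ hf2)
    · obtain ⟨f1, hf1, hx1'⟩ := liftW_edges G _ _ _ (m.path e1) x hx1
      rw [mem_edges_single hx2] at hx1'
      exact absurd hx1' (by simp)
    · obtain ⟨f1, hf1, hx1'⟩ := liftW_edges G _ _ _ (m.path e1) x hx1
      rw [mem_edges_single hx2] at hx1'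
      exact absurd hx1' (by simp)
    · obtain ⟨f2, hf2, hx2'⟩ := liftW_edges G _ _ _ (m.path e2) x hx2
      rw [mem_edges_single hx1] at hx2'
      exact absurd hx2' (by simp)
    · have heq := (mem_edges_single hx1).symm.trans (mem_edges_single hx2)
      have h' := Sum.inl.inj (Sum.inr.inj (congrArg Subtype.val heq))
      have hq := congrArg Prod.fst h'
      have hj : j1 = j2 := congrArg Prod.snd h'
      have hv : m.vmap x1 = m.vmap x2 := congrArg Sigma.fst hq
      have hx12 : x1 = x2 := m.vmap_inj hv
      subst hx12
      exact hne (by rw [hj])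
    · have heq := (mem_edges_single hx1).symm.trans (mem_edges_single hx2)
      exact absurd heq (by simp)
    · obtain ⟨f2, hf2, hx2'⟩ := liftW_edges G _ _ _ (m.path e2) x hx2
      rw [mem_edges_single hx1] at hx2'
      exact absurd hx2' (by simp)
    · have heq := (mem_edges_single hx1).symm.trans (mem_edges_single hx2)
      exact absurd heq (by simp)
    · have heq := (mem_edges_single hx1).symm.trans (mem_edges_single hx2)
      have h' := Sum.inr.inj (Sum.inr.inj (congrArg Subtype.val heq))
      have hq := congrArg Prod.fst h'
      have hb : b1 = b2 := congrArg Prod.snd h'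
      have hv : m.vmap x1 = m.vmap x2 := congrArg Sigma.fst hq
      have hx12 : x1 = x2 := m.vmap_inj hv
      subst hx12
      exact hne (by rw [hb])

lemma vmap_not_Bset (H : Multigraph V1 E1) (hc : H.Connected) (he : Nonempty E1)
    (X : Finset (SEg G)) (m : ImmersionModel H (G.deleteEdges ↑(Cfin G X))) (x : V1) :
    ∃ f : E, f ∉ Cfin G X ∧ m.vmap x ∈ G.ends f := by
  obtain ⟨e0⟩ := he
  have key : ∀ (a b : V1), H.ends e0 = s(a, b) → ∀ y : V1, ∃ e : E1, y ∈ H.ends e := by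
    intro a b hab y
    obtain ⟨p⟩ := hc.2 y a
    cases p with
    | nil => exact ⟨e0, by rw [hab]; simp⟩
    | cons e he' q => exact ⟨e, by rw [he']; simp⟩
  obtain ⟨a, b, hab⟩ := exists_sym2_eq (H.ends e0)
  obtain ⟨eH, hxe⟩ := key a b hab x
  have hst := m.ends_eq eH
  have hx : x = m.src eH ∨ x = m.tgt eH := by
    rw [hst] at hxe
    exact Sym2.mem_iff.mp hxe
  have hdiff : m.src eH ≠ m.tgt eH := by
    intro h
    have hl := H.loopless eH
    rw [hst, h] at hl
    exact hl (by simp)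
  have hvne : m.vmap (m.src eH) ≠ m.vmap (m.tgt eH) := fun h => hdiff (m.vmap_inj h)
  rcases hx with h | h
  · obtain ⟨f, hf, hmem⟩ := exists_edge_start (m.path eH) hvne
    exact ⟨f.1, by simpa using f.2, by rw [h]; exact hmem⟩
  · obtain ⟨f, hf, hmem⟩ := exists_edge_end (m.path eH) hvne
    exact ⟨f.1, by simpa using f.2, by rw [h]; exact hmem⟩

lemma exists_untouched (H : Multigraph V1 E1) (hc : H.Connected) (he : Nonempty E1)
    (X : Finset (SEg G)) (m : ImmersionModel H (G.deleteEdges ↑(Cfin G X))) (x : V1) :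
    ∃ i : Fin (G.mdeg (m.vmap x)), ¬ touched G X ⟨m.vmap x, i⟩ := by
  obtain ⟨f, hfC, hfv⟩ := vmap_not_Bset G H hc he X m x
  have hB : m.vmap x ∉ Bset G X := fun hB => hfC (incident_mem_Cfin G hfv hB)
  simp only [Bset, Set.mem_setOf_eq] at hB
  push_neg at hB
  exact hB

lemma not_immersed_cfin (H : Multigraph V1 E1) (hc : H.Connected) (he : Nonempty E1)
    (X : Finset (SEg G)) (hX : ¬ Immersed H.plus (G.star.deleteEdges ↑X)) :
    ¬ Immersed H (G.deleteEdges ↑(Cfin G X)) := by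
  rintro ⟨m⟩
  apply hX
  choose i hi using fun x => exists_untouched G H hc he X m x
  refine ⟨bigModel G H X m i ?_ ?_⟩
  · intro x j
    have h' := hi x
    unfold touched at h'
    push_neg at h'
    obtain ⟨t0, t1, t2, t3⟩ := h'
    fin_cases j
    · exact t0
    · exact t1
  · intro x b
    have h' := hi x
    unfold touched at h'
    push_neg at h'
    obtain ⟨t0, t1, t2, t3⟩ := h'
    cases b
    · exact t2
    · exact t3

lemma finite_SEg : Finite (SEg G) := by
  haveI : Finite (PG G) := by
    have hinc : ∀ (v : V), (Fin (G.mdeg v)) → ∃ e : E, v ∈ G.ends e := by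
      intro v i
      have hpos : 0 < G.mdeg v := i.pos
      obtain ⟨e, he⟩ := Finset.card_pos.mp hpos
      exact ⟨e, (Finset.mem_filter.mp he).2⟩
    apply Finite.of_injective (fun q : PG G =>
      ((hinc q.1 q.2).choose,
       (if q.1 = (epair (G.ends (hinc q.1 q.2).choose)).1 then true else false),
       (⟨q.2.val, by
          have hle : G.mdeg q.1 ≤ Fintype.card E := by
            have := Finset.card_filter_le (Finset.univ : Finset E) (fun e => q.1 ∈ G.ends e)
            simpa [Multigraph.mdeg] using this
          have := q.2.isLt
          omega⟩ : Fin (Fintype.card E + 1))))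
    rintro ⟨v, iv⟩ ⟨w, iw⟩ h
    simp only [Prod.mk.injEq, Fin.mk.injEq] at h
    obtain ⟨he, hb, hval⟩ := h
    have hmv : v ∈ G.ends (hinc v iv).choose := (hinc v iv).choose_spec
    have hmw : w ∈ G.ends (hinc w iw).choose := (hinc w iw).choose_spec
    have hvw : v = w := by
      by_cases hv1 : v = (epair (G.ends (hinc v iv).choose)).1 <;>
        by_cases hw1 : w = (epair (G.ends (hinc w iw).choose)).1
      · rw [hv1, hw1, he]
      · rw [if_pos hv1, if_neg hw1] at hb
        exact absurd hb (by simp)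
      · rw [if_neg hv1, if_pos hw1] at hb
        exact absurd hb (by simp)
      · have hv2 := (mem_sym2_cases hmv).resolve_left hv1
        have hw2 := (mem_sym2_cases hmw).resolve_left hw1
        rw [hv2, hw2, he]
    subst hvw
    have : iv = iw := Fin.ext hval
    rw [this]
  infer_instance

end

end CoverStarAux

/-- `cover_H(G) ≤ cover_{H⁺}(G*)` for connected `H` with at least one edge. -/
theorem coverNum_le_coverNum_plus_star {V1 E1 V E : Type} [Fintype E]
    (H : Multigraph V1 E1) (G : Multigraph V E)
    (hc : H.Connected) (he : Nonempty E1) :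
    Multigraph.coverNum H G ≤ Multigraph.coverNum H.plus G.star := by
  haveI : Finite (CoverStarAux.SEg G) := CoverStarAux.finite_SEg G
  haveI : Fintype (CoverStarAux.SEg G) := Fintype.ofFinite _
  have hU : ¬ Multigraph.Immersed H.plus
      (G.star.deleteEdges ↑(Finset.univ : Finset (CoverStarAux.SEg G))) := by
    rintro ⟨M⟩
    obtain ⟨e0⟩ := he
    have hst := M.ends_eq (Sum.inl e0)
    have hd : M.src (Sum.inl e0) ≠ M.tgt (Sum.inl e0) := by
      intro hh
      have hl := H.plus.loopless (Sum.inl e0)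
      rw [hst, hh] at hl
      exact hl (by simp)
    have hv : M.vmap (M.src (Sum.inl e0)) ≠ M.vmap (M.tgt (Sum.inl e0)) :=
      fun hh => hd (M.vmap_inj hh)
    obtain ⟨f, hf, -⟩ := CoverStarAux.exists_edge_end (M.path (Sum.inl e0)) hv
    exact f.2 (by simp)
  have hne : {n | ∃ C : Finset _,
      ¬ Multigraph.Immersed H.plus (G.star.deleteEdges ↑C) ∧ C.card = n}.Nonempty :=
    ⟨(Finset.univ : Finset (CoverStarAux.SEg G)).card, Finset.univ, hU, rfl⟩
  obtain ⟨X, hX, hXcard⟩ := Nat.sInf_mem hne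
  have h1 : ¬ Multigraph.Immersed H (G.deleteEdges ↑(CoverStarAux.Cfin G X)) :=
    CoverStarAux.not_immersed_cfin G H hc he X hX
  have h2 : Multigraph.coverNum H G ≤ (CoverStarAux.Cfin G X).card :=
    Nat.sInf_le ⟨CoverStarAux.Cfin G X, h1, rfl⟩
  have h3 := CoverStarAux.card_Cfin_le G X
  have h4 : X.card = Multigraph.coverNum H.plus G.star := hXcard
  omega
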